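/- Let x ∈ [0,1] be non-dyadic with digit densities D_1(x) = lim I_n/n existing, 0 < D_1(x) < 1, D_0(x) = 1 - D_1(x). If a^{D_0(x)}·(1-a)^{D_1(x)} > 1/2, then L_a'(x) = +∞ (the difference quotients tend to +∞). -/

import Mathlib

open Topology Filter Set

/-- The de Rham functional equation characterizing Lebesgue's singular function `L_a`
on `[0,1]`, together with continuity. -/
def deRham (a : ℝ) (L : ℝ → ℝ) : Prop :=
  ContinuousOn L (Set.Icc 0 1) ∧
  (∀ x ∈ Set.Icc (0:ℝ) (1/2), L x = a * L (2*x)) ∧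
  (∀ x ∈ Set.Icc (1/2:ℝ) 1, L x = (1-a) * L (2*x - 1) + a)

set_option maxHeartbeats 1000000
set_option linter.unusedSectionVars false

noncomputable def wP (a : ℝ) (ε : ℕ → ℕ) (m : ℕ) : ℝ :=
  ∏ k ∈ Finset.range m, (if ε (k+1) = 1 then 1-a else a)

noncomputable def xtr (ε : ℕ → ℕ) (m : ℕ) : ℝ :=
  ∑ k ∈ Finset.range m, (ε (k+1) : ℝ)/2^(k+1)

lemma geom_half (m : ℕ) : ∑ k ∈ Finset.range m, (1:ℝ)/2^(k+1) = 1 - 1/2^m := by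
  induction m with
  | zero => simp
  | succ m ih => rw [Finset.sum_range_succ, ih, pow_succ]; field_simp; ring

section basic
variable {a : ℝ} {L : ℝ → ℝ} (ha0 : 0 < a) (ha1 : a < 1) (hL : deRham a L)
include ha0 ha1 hL

lemma deRham.L0 : L 0 = 0 := by
  have h := hL.2.1 0 (by constructor <;> norm_num)
  have : (2:ℝ)*0 = 0 := by norm_num
  rw [this] at h
  nlinarith [h]

lemma deRham.L1 : L 1 = 1 := by
  have h := hL.2.2 1 (by constructor <;> norm_num)
  have : (2:ℝ)*1 - 1 = 1 := by norm_num
  rw [this] at h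
  nlinarith [h]

lemma deRham.Lhalf : L (1/2) = a := by
  have h := hL.2.1 (1/2) (by constructor <;> norm_num)
  have : (2:ℝ)*(1/2) = 1 := by norm_num
  rw [this, hL.L1 ha0 ha1] at h
  simpa using h

lemma deRham.mem_Icc : ∀ y ∈ Set.Icc (0:ℝ) 1, L y ∈ Set.Icc (0:ℝ) 1 := by
  obtain ⟨zM, hzM, hM⟩ := isCompact_Icc.exists_isMaxOn (by exact ⟨0, by norm_num⟩) hL.1
  obtain ⟨zm, hzm, hm⟩ := isCompact_Icc.exists_isMinOn (by exact ⟨0, by norm_num⟩) hL.1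
  have hM1 : L zM ≤ 1 := by
    rcases le_or_gt zM (1/2) with hz | hz
    · -- max on left half: L zM = a * L (2 zM) ≤ a * L zM
      have h := hL.2.1 zM ⟨hzM.1, hz⟩
      have h2 : L (2*zM) ≤ L zM := hM ⟨by linarith [hzM.1], by linarith⟩
      have h1 : L 1 ≤ L zM := hM (by constructor <;> norm_num)
      rw [hL.L1 ha0 ha1] at h1
      nlinarith
    · have h := hL.2.2 zM ⟨le_of_lt hz, hzM.2⟩
      have h2 : L (2*zM - 1) ≤ L zM := hM ⟨by linarith, by linarith [hzM.2]⟩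
      nlinarith
  have hm0 : 0 ≤ L zm := by
    rcases le_or_gt zm (1/2) with hz | hz
    · have h := hL.2.1 zm ⟨hzm.1, hz⟩
      have h2 : L zm ≤ L (2*zm) := hm ⟨by linarith [hzm.1], by linarith⟩
      nlinarith
    · have h := hL.2.2 zm ⟨le_of_lt hz, hzm.2⟩
      have h2 : L zm ≤ L (2*zm - 1) := hm ⟨by linarith, by linarith [hzm.2]⟩
      have h0 : L zm ≤ L 0 := hm (by constructor <;> norm_num)
      rw [hL.L0 ha0 ha1] at h0
      nlinarith
  intro y hy
  exact ⟨le_trans hm0 (hm hy), le_trans (hM hy) hM1⟩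
end basic

section basic
variable {a : ℝ} {L : ℝ → ℝ} (ha0 : 0 < a) (ha1 : a < 1) (hL : deRham a L)
include ha0 ha1 hL

lemma deRham.dyadic_step : ∀ n k : ℕ, k < 2^n → L ((k:ℝ)/2^n) ≤ L (((k:ℝ)+1)/2^n) := by
  intro n
  induction n with
  | zero =>
    intro k hk
    interval_cases k
    have e0 : ((0:ℕ):ℝ)/2^0 = 0 := by norm_num
    have e1 : (((0:ℕ):ℝ)+1)/2^0 = 1 := by norm_num
    rw [e0, e1, hL.L0 ha0 ha1, hL.L1 ha0 ha1]
    norm_num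
  | succ n ih =>
    intro k hk
    rcases le_or_gt (k+1) (2^n) with h | h
    · -- left half
      have h1 : ((k:ℝ))/2^(n+1) ∈ Set.Icc (0:ℝ) (1/2) := by
        constructor
        · positivity
        · rw [div_le_div_iff₀ (by positivity) (by norm_num)]
          push_cast
          have : (k:ℝ) ≤ 2^n := by exact_mod_cast Nat.le_of_succ_le h
          rw [pow_succ]; nlinarith [pow_pos (two_pos (α := ℝ)) n]
      have h2 : ((k:ℝ)+1)/2^(n+1) ∈ Set.Icc (0:ℝ) (1/2) := by
        constructor
        · positivity
        · rw [div_le_div_iff₀ (by positivity) (by norm_num)]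
          have : ((k:ℝ))+1 ≤ 2^n := by exact_mod_cast h
          rw [pow_succ]; nlinarith [pow_pos (two_pos (α := ℝ)) n]
      have e1 := hL.2.1 _ h1
      have e2 := hL.2.1 _ h2
      have r1 : 2 * ((k:ℝ)/2^(n+1)) = (k:ℝ)/2^n := by
        rw [pow_succ]; ring
      have r2 : 2 * (((k:ℝ)+1)/2^(n+1)) = ((k:ℝ)+1)/2^n := by
        rw [pow_succ]; ring
      rw [r1] at e1; rw [r2] at e2
      rw [e1, e2]
      have := ih k (by omega)
      nlinarith
    · -- right half : k ≥ 2^n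
      have hk2 : 2^n ≤ k := by omega
      have h1 : ((k:ℝ))/2^(n+1) ∈ Set.Icc (1/2:ℝ) 1 := by
        constructor
        · rw [div_le_div_iff₀ (by norm_num) (by positivity)]
          have : (2:ℝ)^n ≤ k := by exact_mod_cast hk2
          rw [pow_succ]; nlinarith
        · rw [div_le_one (by positivity)]
          have : (k:ℝ) ≤ 2^(n+1) := by exact_mod_cast hk.le
          linarith
      have h2 : ((k:ℝ)+1)/2^(n+1) ∈ Set.Icc (1/2:ℝ) 1 := by
        constructor
        · rw [div_le_div_iff₀ (by norm_num) (by positivity)]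
          have : (2:ℝ)^n ≤ k := by exact_mod_cast hk2
          rw [pow_succ]; nlinarith
        · rw [div_le_one (by positivity)]
          have : ((k:ℝ))+1 ≤ 2^(n+1) := by exact_mod_cast hk
          linarith
      have e1 := hL.2.2 _ h1
      have e2 := hL.2.2 _ h2
      have r1 : 2 * ((k:ℝ)/2^(n+1)) - 1 = ((k:ℝ) - 2^n)/2^n := by
        rw [pow_succ]; field_simp
      have r2 : 2 * (((k:ℝ)+1)/2^(n+1)) - 1 = ((k:ℝ) - 2^n + 1)/2^n := by
        rw [pow_succ]; field_simp; ring
      rw [r1] at e1; rw [r2] at e2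
      rw [e1, e2]
      have hc : ((k - 2^n : ℕ) : ℝ) = (k:ℝ) - 2^n := by
        push_cast [Nat.cast_sub hk2]; ring
      have := ih (k - 2^n) (by omega)
      rw [hc] at this
      nlinarith

end basic

section
variable {L : ℝ → ℝ}

lemma mono_of_dyadic (hc : ContinuousOn L (Set.Icc 0 1))
    (hstep : ∀ n k : ℕ, k < 2^n → L ((k:ℝ)/2^n) ≤ L (((k:ℝ)+1)/2^n)) :
    ∀ x ∈ Set.Icc (0:ℝ) 1, ∀ y ∈ Set.Icc (0:ℝ) 1, x ≤ y → L x ≤ L y := by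
  have hle : ∀ n k l : ℕ, k ≤ l → l ≤ 2^n → L ((k:ℝ)/2^n) ≤ L ((l:ℝ)/2^n) := by
    intro n k l hkl hl
    induction l with
    | zero => simp_all
    | succ l ih =>
      rcases Nat.eq_or_lt_of_le hkl with h | h
      · rw [h]
      · have : L ((l:ℝ)/2^n) ≤ L (((l:ℝ)+1)/2^n) := hstep n l (by omega)
        push_cast
        exact le_trans (ih (by omega) (by omega)) this
  intro x hx y hy hxy
  set u : ℝ → ℕ → ℝ := fun z j => ((⌊2^j * z⌋₊ : ℕ) : ℝ)/2^j with hu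
  have hmem : ∀ z, z ∈ Set.Icc (0:ℝ) 1 → ∀ j, u z j ∈ Set.Icc (0:ℝ) 1 := by
    intro z hz j
    constructor
    · positivity
    · rw [div_le_one (by positivity)]
      have h1 : (⌊2^j * z⌋₊ : ℕ) ≤ 2^j := by
        have : (2:ℝ)^j * z ≤ ((2^j : ℕ) : ℝ) := by push_cast; nlinarith [hz.2, pow_pos (two_pos (α:=ℝ)) j]
        calc ⌊2^j * z⌋₊ ≤ ⌊((2^j:ℕ):ℝ)⌋₊ := Nat.floor_le_floor this
        _ = 2^j := Nat.floor_natCast _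
      exact_mod_cast h1
  have htend : ∀ z, z ∈ Set.Icc (0:ℝ) 1 → Tendsto (u z) atTop (𝓝 z) := by
    intro z hz
    have h1 : ∀ j, u z j ≤ z := by
      intro j
      rw [hu]
      simp only
      rw [div_le_iff₀ (by positivity)]
      have := Nat.floor_le (a := (2:ℝ)^j * z) (mul_nonneg (by positivity) hz.1)
      linarith
    have h2 : ∀ j, z - 1/2^j ≤ u z j := by
      intro j
      rw [hu]; simp only
      rw [sub_le_iff_le_add, ← add_div, le_div_iff₀ (by positivity)]
      have := Nat.lt_floor_add_one ((2:ℝ)^j * z)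
      linarith
    have t1 : Tendsto (fun j : ℕ => z - 1/2^j) atTop (𝓝 z) := by
      have : Tendsto (fun j : ℕ => (1:ℝ)/2^j) atTop (𝓝 0) := by
        simpa [one_div] using tendsto_pow_atTop_nhds_zero_of_lt_one (by norm_num : (0:ℝ) ≤ 1/2) (by norm_num : (1/2:ℝ) < 1) |>.congr (fun n => by rw [div_pow]; norm_num)
      simpa using tendsto_const_nhds.sub this
    exact tendsto_of_tendsto_of_tendsto_of_le_of_le t1 tendsto_const_nhds h2 h1
  have hLx : Tendsto (fun j => L (u x j)) atTop (𝓝 (L x)) :=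
    ((hc x hx).tendsto).comp (tendsto_nhdsWithin_of_tendsto_nhds_of_eventually_within _ (htend x hx) (Filter.Eventually.of_forall (hmem x hx)))
  have hLy : Tendsto (fun j => L (u y j)) atTop (𝓝 (L y)) :=
    ((hc y hy).tendsto).comp (tendsto_nhdsWithin_of_tendsto_nhds_of_eventually_within _ (htend y hy) (Filter.Eventually.of_forall (hmem y hy)))
  refine le_of_tendsto_of_tendsto' hLx hLy (fun j => ?_)
  have h1 : ⌊2^j * x⌋₊ ≤ ⌊2^j * y⌋₊ := Nat.floor_le_floor (by nlinarith [pow_pos (two_pos (α:=ℝ)) j])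
  have h2 : ⌊2^j * y⌋₊ ≤ 2^j := by
    have : (2:ℝ)^j * y ≤ ((2^j : ℕ) : ℝ) := by push_cast; nlinarith [hy.2, pow_pos (two_pos (α:=ℝ)) j]
    calc ⌊2^j * y⌋₊ ≤ ⌊((2^j:ℕ):ℝ)⌋₊ := Nat.floor_le_floor this
    _ = 2^j := Nat.floor_natCast _
  exact hle j _ _ h1 h2
end

section
variable {a : ℝ} {L : ℝ → ℝ} {ε : ℕ → ℕ}
  (ha0 : 0 < a) (ha1 : a < 1) (hε : ∀ n, ε n ≤ 1)

lemma xtr_nonneg (m : ℕ) : 0 ≤ xtr ε m :=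
  Finset.sum_nonneg (fun k _ => by positivity)

include hε in
lemma xtr_add_le (m : ℕ) : xtr ε m + 1/2^m ≤ 1 := by
  have : xtr ε m ≤ ∑ k ∈ Finset.range m, (1:ℝ)/2^(k+1) := by
    apply Finset.sum_le_sum
    intro k _
    apply div_le_div_of_nonneg_right ?_ (by positivity)
    · exact_mod_cast hε (k+1)
  rw [geom_half] at this
  linarith

include ha0 ha1 in
lemma wP_pos (m : ℕ) : 0 < wP a ε m := by
  apply Finset.prod_pos
  intro k _
  split <;> linarith

include ha0 ha1 in
lemma wP_le_one (m : ℕ) : wP a ε m ≤ 1 := by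
  apply Finset.prod_le_one
  · intro k _; split <;> linarith
  · intro k _; split <;> linarith

include hε in
lemma wP_eq_pow (m : ℕ) : wP a ε m
    = a ^ (m - ∑ k ∈ Finset.range m, ε (k+1)) * (1-a) ^ (∑ k ∈ Finset.range m, ε (k+1)) := by
  induction m with
  | zero => simp [wP]
  | succ m ih =>
    have hsle : ∑ k ∈ Finset.range m, ε (k+1) ≤ m := by
      calc ∑ k ∈ Finset.range m, ε (k+1) ≤ ∑ k ∈ Finset.range m, 1 :=
            Finset.sum_le_sum (fun k _ => hε (k+1))
        _ = m := by simp
    rw [wP, Finset.prod_range_succ, ← wP, ih, Finset.sum_range_succ]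
    rcases Nat.le_one_iff_eq_zero_or_eq_one.1 (hε (m+1)) with h | h
    · rw [h]
      simp only [Nat.add_zero, if_neg (by norm_num : ¬ (0 = 1))]
      rw [Nat.succ_sub hsle, pow_succ]
      ring
    · rw [h, if_pos rfl, Nat.succ_sub_succ, pow_succ]
      ring

include hε in
lemma hεsummable : Summable (fun n : ℕ => (ε (n+1) : ℝ)/2^(n+1)) := by
  have hg : Summable (fun n : ℕ => (1:ℝ)/2^(n+1)) := by
    have := summable_geometric_two.comp_injective (add_right_injective 1)
    simpa [one_div, inv_pow, Function.comp_def, add_comm] using this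
  refine Summable.of_nonneg_of_le (fun n => by positivity) (fun n => ?_) hg
  apply div_le_div_of_nonneg_right ?_ (by positivity)
  exact_mod_cast hε (n+1)
end

section
variable {a : ℝ} {L : ℝ → ℝ} {ε : ℕ → ℕ} {x : ℝ}
  (ha0 : 0 < a) (ha1 : a < 1) (hε : ∀ n, ε n ≤ 1)
  (hsum : Summable (fun n : ℕ => (ε (n+1) : ℝ)/2^(n+1)))
  (hx : x = ∑' n : ℕ, (ε (n+1) : ℝ) / 2 ^ (n+1))

include hε hsum hx in
lemma x_bounds (m : ℕ) : xtr ε m ≤ x ∧ x ≤ xtr ε m + 1/2^m := by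
  have key := Summable.sum_add_tsum_nat_add m hsum
  rw [← hx] at key
  have htail0 : 0 ≤ ∑' i : ℕ, (ε (i+m+1) : ℝ)/2^(i+m+1) := tsum_nonneg (fun i => by positivity)
  have htail1 : (∑' i : ℕ, (ε (i+m+1) : ℝ)/2^(i+m+1)) ≤ 1/2^m := by
    have hg : Summable (fun i : ℕ => (1:ℝ)/2^(i+m+1)) := by
      have : ∀ i : ℕ, (1:ℝ)/2^(i+m+1) = (1/2^(m+1)) * (1/2)^i := by
        intro i; rw [div_pow, one_pow, pow_add, pow_add]; field_simp; ring
      simp_rw [this]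
      exact summable_geometric_two.mul_left _
    have h1 : (∑' i : ℕ, (ε (i+m+1) : ℝ)/2^(i+m+1)) ≤ ∑' i : ℕ, (1:ℝ)/2^(i+m+1) := by
      apply Summable.tsum_le_tsum _ (by simpa [add_assoc] using (summable_nat_add_iff m).2 hsum) hg
      intro i
      apply div_le_div_of_nonneg_right ?_ (by positivity)
      exact_mod_cast hε (i+m+1)
    have h2 : (∑' i : ℕ, (1:ℝ)/2^(i+m+1)) = 1/2^m := by
      have : ∀ i : ℕ, (1:ℝ)/2^(i+m+1) = (1/2^(m+1)) * (1/2)^i := by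
        intro i; rw [div_pow, one_pow, pow_add, pow_add]; field_simp; ring
      rw [tsum_congr this, tsum_mul_left, tsum_geometric_two]
      rw [pow_succ]; field_simp
    linarith
  have key' : xtr ε m + (∑' i : ℕ, (ε (i+m+1) : ℝ)/2^(i+m+1)) = x := key
  exact ⟨by linarith, by linarith⟩
end

section
variable {a : ℝ} {L : ℝ → ℝ} {ε : ℕ → ℕ}
  (ha0 : 0 < a) (ha1 : a < 1) (hε : ∀ n, ε n ≤ 1) (hL : deRham a L)
  (hL0 : L 0 = 0) (hLhalf : L (1/2) = a)

include hε hL hL0 hLhalf in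
lemma selfsim : ∀ m : ℕ, ∀ s ∈ Set.Icc (0:ℝ) 1,
    L (xtr ε m + s/2^m) = L (xtr ε m) + wP a ε m * L s := by
  intro m
  induction m with
  | zero => intro s hs; simp [xtr, wP, hL0]
  | succ m ih =>
    intro s hs
    have he := hε (m+1)
    have harg : ∀ t : ℝ, xtr ε (m+1) + t/2^(m+1) = xtr ε m + (((ε (m+1):ℝ)+t)/2)/2^m := by
      intro t
      have : xtr ε (m+1) = xtr ε m + (ε (m+1) : ℝ)/2^(m+1) := Finset.sum_range_succ _ _
      rw [this, pow_succ]
      field_simp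
      ring
    have hmem : ∀ t ∈ Set.Icc (0:ℝ) 1, ((ε (m+1):ℝ)+t)/2 ∈ Set.Icc (0:ℝ) 1 := by
      intro t ht
      have h1 : (ε (m+1):ℝ) ≤ 1 := by exact_mod_cast he
      constructor
      · have : (0:ℝ) ≤ (ε (m+1):ℝ) := by positivity
        have := ht.1
        linarith
      · have := ht.2
        linarith
    have key : ∀ t ∈ Set.Icc (0:ℝ) 1,
        L (xtr ε (m+1) + t/2^(m+1)) = L (xtr ε m) + wP a ε m * L (((ε (m+1):ℝ)+t)/2) := by
      intro t ht
      rw [harg t]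
      exact ih _ (hmem t ht)
    have hwp : wP a ε (m+1) = wP a ε m * (if ε (m+1) = 1 then 1-a else a) :=
      Finset.prod_range_succ _ _
    have hx0 : L (xtr ε (m+1)) = L (xtr ε m) + wP a ε m * L (((ε (m+1):ℝ)+0)/2) := by
      have := key 0 (by norm_num)
      simpa using this
    have hxs := key s hs
    rcases Nat.le_one_iff_eq_zero_or_eq_one.1 he with h | h
    · rw [h] at hx0 hxs hwp
      have h2 : ((0:ℕ):ℝ) = (0:ℝ) := by norm_num
      rw [h2] at hx0 hxs
      have e1 : L (((0:ℝ)+s)/2) = a * L s := by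
        have := hL.2.1 (s/2) ⟨by linarith [hs.1], by linarith [hs.2]⟩
        have h3 : 2*(s/2) = s := by ring
        rw [h3] at this
        rw [show ((0:ℝ)+s)/2 = s/2 by ring, this]
      have e0 : L (((0:ℝ)+0)/2) = 0 := by
        rw [show ((0:ℝ)+0)/2 = 0 by ring, hL0]
      rw [e1] at hxs
      rw [e0] at hx0
      rw [hxs, hx0, hwp]
      norm_num
      ring
    · rw [h] at hx0 hxs hwp
      have h2 : ((1:ℕ):ℝ) = (1:ℝ) := by norm_num
      rw [h2] at hx0 hxs
      have e1 : L (((1:ℝ)+s)/2) = (1-a) * L s + a := by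
        have := hL.2.2 ((1+s)/2) ⟨by linarith [hs.1], by linarith [hs.2]⟩
        have h3 : 2*((1+s)/2) - 1 = s := by ring
        rw [h3] at this
        exact this
      have e0 : L (((1:ℝ)+0)/2) = a := by
        rw [show ((1:ℝ)+0)/2 = 1/2 by ring, hLhalf]
      rw [e1] at hxs
      rw [e0] at hx0
      rw [hxs, hx0, hwp]
      norm_num
      ring
end

lemma key_growth {a d : ℝ} {ε : ℕ → ℕ}
    (ha0 : 0 < a) (ha1 : a < 1) (hε : ∀ n, ε n ≤ 1)
    (hd : Tendsto (fun n : ℕ => (∑ k ∈ Finset.range n, (ε (k+1) : ℝ)) / n) atTop (𝓝 d))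
    (hd0 : 0 < d) (hd1 : d < 1)
    (hcrit : a ^ (1 - d) * (1-a) ^ d > 1/2) (C : ℝ) :
    ∃ N : ℕ, ∀ n, N ≤ n → ∀ m b : ℕ, n+2 ≤ m → b ≤ 1 →
      (∀ k, n+2 ≤ k → k ≤ m-1 → ε k = b) →
      C ≤ min a (1-a) * 2^n * wP a ε (m-1) := by
  have ha1' : 0 < 1 - a := by linarith
  set lam : ℝ := Real.log 2 + (1-d)*Real.log a + d * Real.log (1-a) with hlamdef
  have hlam : 0 < lam := by
    have h1 : Real.log (a ^ (1-d) * (1-a) ^ d) > Real.log (1/2) :=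
      Real.log_lt_log (by norm_num) hcrit
    have h2 : Real.log (a ^ (1-d) * (1-a) ^ d)
        = (1-d)*Real.log a + d * Real.log (1-a) := by
      rw [Real.log_mul (by positivity) (by positivity), Real.log_rpow ha0, Real.log_rpow ha1']
    have h3 : Real.log (1/2 : ℝ) = - Real.log 2 := by
      rw [one_div, Real.log_inv]
    rw [h2, h3] at h1
    rw [hlamdef]; linarith
  set beta : ℝ := |Real.log (1-a) - Real.log a| with hbetadef
  have hbeta : 0 ≤ beta := abs_nonneg _
  set c : ℝ := min d (1-d) with hcdef
  have hc : 0 < c := by rw [hcdef]; simp only [lt_min_iff]; constructor <;> linarith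
  have hlog2 : 0 < Real.log 2 := Real.log_pos (by norm_num)
  set delta : ℝ := min (lam/(4*(beta+1))) (min (c/2) (c*lam/(16*(Real.log 2 + 1)))) with hddef
  have hdelta : 0 < delta := by
    rw [hddef]; simp only [lt_min_iff]
    refine ⟨by positivity, by positivity, by positivity⟩
  have hd1' : delta ≤ lam/(4*(beta+1)) := min_le_left _ _
  have hd2 : delta ≤ c/2 := le_trans (min_le_right _ _) (min_le_left _ _)
  have hd3 : delta ≤ c*lam/(16*(Real.log 2 + 1)) := le_trans (min_le_right _ _) (min_le_right _ _)
  clear_value delta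
  clear_value lam beta c
  -- digit count control
  obtain ⟨N₀', hN₀'⟩ := (Metric.tendsto_atTop.1 hd) delta hdelta
  set N₀ := max N₀' 1 with hN₀def
  clear_value N₀
  set Ir : ℕ → ℝ := fun j => ∑ k ∈ Finset.range j, (ε (k+1) : ℝ) with hIrdef
  have hI : ∀ j : ℕ, N₀ ≤ j → |Ir j - d * j| ≤ delta * j := by
    intro j hj
    rw [hIrdef]
    simp only
    have hj1 : 1 ≤ j := by rw [hN₀def] at hj; exact le_trans (le_max_right _ _) hj
    have hjR : (0:ℝ) < j := by exact_mod_cast hj1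
    have : dist ((∑ k ∈ Finset.range j, (ε (k+1) : ℝ)) / j) d < delta := by
      refine hN₀' j ?_
      rw [hN₀def] at hj
      exact le_trans (le_max_left _ _) hj
    rw [Real.dist_eq] at this
    have heq : (∑ k ∈ Finset.range j, (ε (k+1) : ℝ)) - d * j
        = ((∑ k ∈ Finset.range j, (ε (k+1) : ℝ)) / j - d) * j := by
      field_simp
    rw [heq, abs_mul, abs_of_pos hjR]
    have h' : |(∑ k ∈ Finset.range j, (ε (k+1) : ℝ)) / j - d| ≤ delta := le_of_lt this
    exact mul_le_mul_of_nonneg_right h' hjR.le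
  set mina := min a (1-a) with hminadef
  have hmina : 0 < mina := lt_min ha0 ha1'
  clear_value mina
  set C' := max C 1 with hC'def
  have hC'1 : (1:ℝ) ≤ C' := le_max_right _ _
  have hCC' : C ≤ C' := le_max_left _ _
  clear_value C'
  set V : ℝ := Real.log C' - Real.log mina + Real.log 2 + 1 with hVdef
  set N₁ : ℕ := ⌈V / (lam/2)⌉₊ with hN₁def
  clear_value N₁ V
  refine ⟨max N₀ N₁, ?_⟩
  intro n hn m b hm hb hrun
  set j₁ := n + 1 with hj₁def
  set j₂ := m - 1 with hj₂def
  clear_value j₁ j₂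
  have hj₁₂ : j₁ ≤ j₂ := by omega
  have hN₀n : N₀ ≤ j₁ := by have := le_trans (le_max_left _ _) hn; omega
  have hI₁ := hI j₁ hN₀n
  have hI₂ := hI j₂ (le_trans hN₀n hj₁₂)
  -- the run identity
  have hrunsum : Ir j₂ - Ir j₁ = (b:ℝ) * ((j₂:ℝ) - j₁) := by
    have hsplit : Ir j₂ = Ir j₁ + ∑ k ∈ Finset.Ico j₁ j₂, (ε (k+1) : ℝ) := by
      rw [hIrdef]
      simp only
      rw [← Finset.sum_range_add_sum_Ico _ hj₁₂]
    have hconst : ∑ k ∈ Finset.Ico j₁ j₂, (ε (k+1) : ℝ) = (b:ℝ) * ((j₂:ℝ) - j₁) := by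
      have hc' : ∀ k ∈ Finset.Ico j₁ j₂, (ε (k+1) : ℝ) = (b:ℝ) := by
        intro k hk
        rw [Finset.mem_Ico] at hk
        exact_mod_cast hrun (k+1) (by omega) (by omega)
      rw [Finset.sum_congr rfl hc', Finset.sum_const, Nat.card_Ico, nsmul_eq_mul,
        Nat.cast_sub hj₁₂]
      ring
    rw [hsplit, hconst]; ring
  -- run length bound : t := j₂ - j₁
  set t : ℝ := (j₂:ℝ) - j₁ with htdef
  clear_value t
  have ht0 : 0 ≤ t := by
    rw [htdef]; have : (j₁:ℝ) ≤ j₂ := by exact_mod_cast hj₁₂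
    linarith
  have hbd : |(b:ℝ) - d| ≥ c := by
    interval_cases b
    · simp only [Nat.cast_zero, zero_sub, abs_neg, abs_of_pos hd0]
      rw [hcdef]; exact min_le_left _ _
    · simp only [Nat.cast_one]
      rw [abs_of_pos (by linarith), hcdef]
      exact min_le_right _ _
  have htbound : c * t ≤ delta * (2 * j₁ + t) := by
    have h1 : c * t ≤ |Ir j₂ - Ir j₁ - d * t| := by
      have heq2 : Ir j₂ - Ir j₁ - d * t = ((b:ℝ) - d) * t := by rw [hrunsum]; ring
      rw [heq2, abs_mul, abs_of_nonneg ht0]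
      exact mul_le_mul_of_nonneg_right hbd ht0
    have h2 : |Ir j₂ - Ir j₁ - d * t| ≤ delta * j₁ + delta * j₂ := by
      have : Ir j₂ - Ir j₁ - d * t = (Ir j₂ - d * j₂) - (Ir j₁ - d * j₁) := by
        rw [htdef]; ring
      rw [this]
      calc |(Ir j₂ - d * j₂) - (Ir j₁ - d * j₁)| ≤ |Ir j₂ - d * j₂| + |Ir j₁ - d * j₁| :=
            abs_sub _ _
        _ ≤ delta * j₂ + delta * j₁ := add_le_add hI₂ hI₁
        _ = delta * j₁ + delta * j₂ := by ring
    have h4 : (j₂ : ℝ) = j₁ + t := by rw [htdef]; ring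
    calc c * t ≤ |Ir j₂ - Ir j₁ - d * t| := h1
      _ ≤ delta * j₁ + delta * j₂ := h2
      _ = delta * (2 * j₁ + t) := by rw [h4]; ring
  have h5 : (c/2) * t ≤ 2 * delta * j₁ := by
    have hp := mul_le_mul_of_nonneg_right hd2 ht0
    linarith only [htbound, hp]
  have htlog : t * Real.log 2 ≤ lam / 4 * j₁ := by
    have hj₁0 : (0:ℝ) ≤ j₁ := by positivity
    have h16 : delta * (16 * (Real.log 2 + 1)) ≤ c * lam := by
      rw [le_div_iff₀ (by positivity)] at hd3
      linarith
    have hA : c * t * Real.log 2 ≤ 4 * delta * Real.log 2 * j₁ := by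
      linarith only [mul_le_mul_of_nonneg_right h5 hlog2.le]
    have hB : 16 * (delta * Real.log 2) ≤ c * lam := by linarith only [hdelta, h16]
    have hC2 : 4 * delta * Real.log 2 * j₁ ≤ c * lam / 4 * j₁ := by
      linarith only [mul_le_mul_of_nonneg_right hB hj₁0]
    have hfin : c * (t * Real.log 2) ≤ c * (lam / 4 * j₁) := by linarith only [hA, hC2]
    exact le_of_mul_le_mul_left hfin hc
  -- log of wP
  set I₂ : ℕ := ∑ k ∈ Finset.range j₂, ε (k+1) with hI₂def
  clear_value I₂
  have hI₂le : I₂ ≤ j₂ := by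
    rw [hI₂def]
    calc ∑ k ∈ Finset.range j₂, ε (k+1) ≤ ∑ k ∈ Finset.range j₂, 1 :=
          Finset.sum_le_sum (fun k _ => hε (k+1))
      _ = j₂ := by simp
  have hIr₂ : Ir j₂ = (I₂ : ℝ) := by rw [hIrdef, hI₂def]; push_cast; rfl
  have hlogwP : Real.log (wP a ε j₂) = ((j₂:ℝ) - I₂) * Real.log a + (I₂:ℝ) * Real.log (1-a) := by
    rw [wP_eq_pow hε j₂, ← hI₂def, Real.log_mul (by positivity) (by positivity),
      Real.log_pow, Real.log_pow]
    have : ((j₂ - I₂ : ℕ) : ℝ) = (j₂:ℝ) - I₂ := by rw [Nat.cast_sub hI₂le]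
    rw [this]
  have hlogQ : Real.log 2 * j₂ + Real.log (wP a ε j₂) ≥ 3 * lam / 4 * j₂ := by
    have halg : Real.log 2 * j₂ + Real.log (wP a ε j₂) - lam * j₂
        = (Ir j₂ - d * j₂) * (Real.log (1-a) - Real.log a) := by
      rw [hlogwP, hIr₂, hlamdef]; ring
    have habs : |(Ir j₂ - d * j₂) * (Real.log (1-a) - Real.log a)| ≤ delta * j₂ * beta := by
      rw [abs_mul, hbetadef]
      exact mul_le_mul hI₂ le_rfl (abs_nonneg _) (mul_nonneg hdelta.le (by positivity))
    have hdb : delta * beta ≤ lam / 4 := by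
      have h' : delta * (4*(beta+1)) ≤ lam := by
        rw [le_div_iff₀ (by positivity)] at hd1'
        linarith only [hd1']
      linarith only [h', hdelta]
    have hj₂0 : (0:ℝ) ≤ j₂ := by positivity
    have h7 : delta * j₂ * beta ≤ lam / 4 * j₂ := by
      linarith only [mul_le_mul_of_nonneg_right hdb hj₂0]
    linarith only [halg, h7, (abs_le.1 habs).1]
  -- assemble
  have hq : Real.log (mina * 2^n * wP a ε j₂)
      = Real.log mina + n * Real.log 2 + Real.log (wP a ε j₂) := by
    rw [Real.log_mul (by positivity) (ne_of_gt (wP_pos ha0 ha1 j₂)),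
      Real.log_mul (by positivity) (by positivity), Real.log_pow]
  have hj₂n : (j₂ : ℝ) = n + 1 + t := by rw [htdef, hj₁def]; push_cast; ring
  have hVN : V ≤ lam/2 * j₁ := by
    have h8 : (N₁ : ℝ) ≤ j₁ := by
      have hN1n : N₁ ≤ n + 1 := by
        have := le_trans (le_max_right N₀ N₁) hn
        omega
      rw [hj₁def]
      exact_mod_cast hN1n
    have h9 : V / (lam/2) ≤ (N₁:ℝ) := by rw [hN₁def]; exact Nat.le_ceil _
    rw [div_le_iff₀ (by positivity)] at h9
    calc V ≤ N₁ * (lam/2) := h9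
      _ ≤ j₁ * (lam/2) := mul_le_mul_of_nonneg_right h8 (by positivity)
      _ = lam/2 * j₁ := by ring
  have hlogfinal : Real.log C' < Real.log (mina * 2^n * wP a ε j₂) := by
    rw [hq]
    have : (n:ℝ) * Real.log 2 = Real.log 2 * j₂ - (t + 1) * Real.log 2 := by
      rw [hj₂n]; ring
    rw [this]
    have h10 : 3 * lam / 4 * j₂ ≥ 3 * lam / 4 * j₁ := by
      have hj' : (j₁:ℝ) ≤ j₂ := by exact_mod_cast hj₁₂
      exact mul_le_mul_of_nonneg_left hj' (by linarith only [hlam])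
    have hVdef' : Real.log C' = V - 1 + Real.log mina - Real.log 2 := by rw [hVdef]; ring
    rw [hVdef']
    linarith only [hlogQ, htlog, h10, hVN]
  have hqpos : 0 < mina * 2^n * wP a ε j₂ := by
    have := wP_pos (ε := ε) ha0 ha1 j₂
    positivity
  have hC'pos : (0:ℝ) < C' := lt_of_lt_of_le one_pos hC'1
  have : C' < mina * 2^n * wP a ε j₂ := by
    have := Real.exp_lt_exp.2 hlogfinal
    rwa [Real.exp_log hC'pos, Real.exp_log hqpos] at this
  calc C ≤ C' := hCC'
    _ ≤ mina * 2^n * wP a ε j₂ := le_of_lt this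

theorem deriv_top_of_density (a : ℝ) (ha0 : 0 < a) (ha1 : a < 1)
    (ha : a ≠ 1/2) (L : ℝ → ℝ) (hL : deRham a L)
    (ε : ℕ → ℕ) (hε : ∀ n, ε n ≤ 1)
    (hinf1 : ∀ N, ∃ n ≥ N, ε n = 1) (hinf0 : ∀ N, ∃ n ≥ N, ε n = 0)
    (x : ℝ) (hx : x = ∑' n : ℕ, (ε (n+1) : ℝ) / 2 ^ (n+1))
    (d : ℝ)
    (hd : Tendsto (fun n : ℕ => (∑ k ∈ Finset.range n, (ε (k+1) : ℝ)) / n)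
      atTop (𝓝 d))
    (hd0 : 0 < d) (hd1 : d < 1)
    (hcrit : a ^ (1 - d) * (1-a) ^ d > 1/2) :
    Tendsto (fun h : ℝ => (L (x+h) - L x) / h) (𝓝[≠] 0) atTop := by
  classical
  have ha1' : 0 < 1 - a := by linarith
  have hL0 := hL.L0 ha0 ha1
  have hL1 := hL.L1 ha0 ha1
  have hLhalf := hL.Lhalf ha0 ha1
  have hmono : ∀ y ∈ Set.Icc (0:ℝ) 1, ∀ z ∈ Set.Icc (0:ℝ) 1, y ≤ z → L y ≤ L z :=
    mono_of_dyadic hL.1 (hL.dyadic_step ha0 ha1)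
  have hsum := hεsummable hε
  have hxb : ∀ m : ℕ, xtr ε m ≤ x ∧ x ≤ xtr ε m + 1/2^m := x_bounds hε hsum hx
  have hss := selfsim hε hL hL0 hLhalf
  -- x ∈ (0,1)
  have hx0 : 0 < x := by
    obtain ⟨k, hk1, hkv⟩ := hinf1 1
    have h1 : (1:ℝ)/2^k ≤ xtr ε k := by
      have : (ε ((k-1)+1) : ℝ)/2^((k-1)+1) = 1/2^k := by
        rw [show k - 1 + 1 = k by omega, hkv]; norm_num
      calc (1:ℝ)/2^k = (ε ((k-1)+1) : ℝ)/2^((k-1)+1) := this.symm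
        _ ≤ xtr ε k := Finset.single_le_sum (f := fun i => (ε (i+1) : ℝ)/2^(i+1))
            (fun i _ => by positivity) (Finset.mem_range.2 (by omega))
    have := (hxb k).1
    have hp : (0:ℝ) < 1/2^k := by positivity
    linarith
  have hx1 : x < 1 := by
    obtain ⟨k, hk1, hkv⟩ := hinf0 1
    have hxtreq : xtr ε k = xtr ε (k-1) := by
      have : xtr ε ((k-1)+1) = xtr ε (k-1) + (ε ((k-1)+1) : ℝ)/2^((k-1)+1) :=
        Finset.sum_range_succ _ _
      rw [show k - 1 + 1 = k by omega] at this
      rw [this, hkv]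
      norm_num
    have h2 := xtr_add_le hε (k-1)
    have h3 := (hxb k).2
    have h4 : (1:ℝ)/2^k < 1/2^(k-1) := by
      apply div_lt_div_of_pos_left one_pos (by positivity)
      exact pow_lt_pow_right₀ (by norm_num) (by omega)
    have hp : (0:ℝ) < 1/2^k := by positivity
    rw [hxtreq] at h3
    linarith
  -- main limit
  rw [tendsto_atTop]
  intro C
  obtain ⟨N, hN⟩ := key_growth ha0 ha1 hε hd hd0 hd1 hcrit C
  have hη : (0:ℝ) < min (1/2^(N+2)) (min x (1-x)) := by
    apply lt_min (by positivity) (lt_min hx0 (by linarith))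
  set η := min (1/2^(N+2)) (min x (1-x)) with hηdef
  have hη1 : η ≤ 1/2^(N+2) := min_le_left _ _
  have hη2 : η ≤ x := le_trans (min_le_right _ _) (min_le_left _ _)
  have hη3 : η ≤ 1-x := le_trans (min_le_right _ _) (min_le_right _ _)
  clear_value η
  filter_upwards [nhdsWithin_le_nhds (Metric.ball_mem_nhds (0:ℝ) hη), self_mem_nhdsWithin]
    with h hball hne
  rw [Metric.mem_ball, Real.dist_eq, sub_zero] at hball
  rw [Set.mem_compl_iff, Set.mem_singleton_iff] at hne
  have hh0 : 0 < |h| := abs_pos.2 hne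
  -- choose n with 1/2^(n+1) ≤ |h| < 1/2^n
  have hex : ∃ k : ℕ, (1:ℝ)/2^(k+1) ≤ |h| := by
    obtain ⟨n0, hn0⟩ := exists_pow_lt_of_lt_one hh0 (by norm_num : (1/2:ℝ) < 1)
    refine ⟨n0, ?_⟩
    calc (1:ℝ)/2^(n0+1) ≤ (1:ℝ)/2^n0 := by
          apply div_le_div_of_nonneg_left one_pos.le (by positivity)
          exact pow_le_pow_right₀ (by norm_num) (by omega)
      _ = (1/2)^n0 := by rw [div_pow, one_pow]
      _ ≤ |h| := hn0.le
  set n := Nat.find hex with hndef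
  have hn1 : (1:ℝ)/2^(n+1) ≤ |h| := Nat.find_spec hex
  have hnN : N + 2 ≤ n := by
    by_contra hcon
    push_neg at hcon
    have : (1:ℝ)/2^(N+2) ≤ 1/2^(n+1) := by
      apply div_le_div_of_nonneg_left one_pos.le (by positivity)
      exact pow_le_pow_right₀ (by norm_num) (by omega)
    linarith
  have hn2 : |h| < 1/2^n := by
    have hn1' : 1 ≤ n := by omega
    have := Nat.find_min hex (m := n - 1) (by omega)
    push_neg at this
    rw [show n - 1 + 1 = n by omega] at this
    exact this
  have h2n : (0:ℝ) < 2^n := by positivity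
  have hxIcc : x ∈ Set.Icc (0:ℝ) 1 := ⟨hx0.le, hx1.le⟩
  have hxhIcc : x + h ∈ Set.Icc (0:ℝ) 1 := by
    constructor
    · have := neg_abs_le h
      linarith
    · have := le_abs_self h
      linarith
  rcases lt_or_gt_of_ne hne with hneg | hpos
  · -- h < 0 : use left side, next digit 1
    have habs : |h| = -h := abs_of_neg hneg
    have hexm : ∃ k, n + 2 ≤ k ∧ ε k = 1 := by
      obtain ⟨k, hk1, hk2⟩ := hinf1 (n+2); exact ⟨k, hk1, hk2⟩
    set M := Nat.find hexm with hMdef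
    obtain ⟨hM1, hM2⟩ := Nat.find_spec hexm
    have hrun : ∀ k, n + 2 ≤ k → k ≤ M - 1 → ε k = 0 := by
      intro k hk1 hk2
      have hkM : k < M := by omega
      have := Nat.find_min hexm hkM
      push_neg at this
      have h1' := this hk1
      have h2' := hε k
      omega
    have hMm1 : M - 1 + 1 = M := by omega
    have hkey := hN n (by omega) M 0 hM1 (by omega) hrun
    -- geometry
    have hxtrM : xtr ε M = xtr ε (M-1) + 1/2^M := by
      have hs : xtr ε ((M-1)+1) = xtr ε (M-1) + (ε ((M-1)+1) : ℝ)/2^((M-1)+1) :=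
        Finset.sum_range_succ _ _
      rw [hMm1] at hs
      rw [hs, hM2]
      norm_num
    have hP := wP_pos (a := a) (ε := ε) ha0 ha1 (M-1)
    have hhalfM : (1/2:ℝ)/2^(M-1) = 1/2^M := by
      rw [show M = (M-1)+1 by omega, pow_succ]
      field_simp
      simp
    have hsub1 : xtr ε (M-1) + 1/2^(M-1) ∈ Set.Icc (0:ℝ) 1 := by
      constructor
      · have := xtr_nonneg (ε := ε) (M-1); positivity
      · exact xtr_add_le hε (M-1)
    have hmid : xtr ε (M-1) + 1/2^M ∈ Set.Icc (0:ℝ) 1 := by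
      constructor
      · have := xtr_nonneg (ε := ε) (M-1)
        have : (0:ℝ) < 1/2^M := by positivity
        have := xtr_nonneg (ε := ε) (M-1)
        linarith
      · have : (1:ℝ)/2^M ≤ 1/2^(M-1) := by
          apply div_le_div_of_nonneg_left one_pos.le (by positivity)
          exact pow_le_pow_right₀ (by norm_num) (by omega)
        have h1 := xtr_add_le hε (M-1)
        linarith
    have hLmid : L (xtr ε (M-1) + 1/2^M) = L (xtr ε (M-1)) + wP a ε (M-1) * a := by
      have := hss (M-1) (1/2) (by norm_num)
      rw [hhalfM] at this
      rw [this, hLhalf]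
    have hLbase : L (xtr ε (M-1)) ∈ Set.Icc (0:ℝ) 1 := by
      apply hL.mem_Icc ha0 ha1
      constructor
      · exact xtr_nonneg _
      · have h1 := xtr_add_le hε (M-1)
        have : (0:ℝ) < 1/2^(M-1) := by positivity
        linarith
    -- L x ≥ L (xtr (M-1) + 1/2^M)
    have hLx_ge : L (xtr ε (M-1) + 1/2^M) ≤ L x := by
      apply hmono _ hmid _ hxIcc
      rw [← hxtrM]
      exact (hxb M).1
    -- L (x+h) ≤ L (xtr (M-1))
    have hLxh_le : L (x+h) ≤ L (xtr ε (M-1)) := by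
      apply hmono _ hxhIcc
      · constructor
        · exact xtr_nonneg _
        · have h1 := xtr_add_le hε (M-1)
          have : (0:ℝ) < 1/2^(M-1) := by positivity
          linarith
      · -- x + h ≤ xtr ε (M-1)
        have h1 : x ≤ xtr ε (M-1) + 1/2^(M-1) := by
          have := (hxb (M-1)).2
          linarith
        have h2 : (1:ℝ)/2^(M-1) ≤ 1/2^(n+1) := by
          apply div_le_div_of_nonneg_left one_pos.le (by positivity)
          exact pow_le_pow_right₀ (by norm_num) (by omega)
        have h3 : (1:ℝ)/2^(n+1) ≤ -h := by rw [← habs]; exact hn1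
        linarith
    -- conclude
    have hnum : wP a ε (M-1) * a ≤ L x - L (x+h) := by
      rw [hLmid] at hLx_ge
      linarith
    have hDQ : (L (x+h) - L x)/h = (L x - L (x+h))/(-h) := by
      rw [div_neg, ← neg_div, neg_sub]
    rw [hDQ]
    have hhpos : 0 < -h := by linarith
    have hstep1 : (wP a ε (M-1) * a)/(-h) ≤ (L x - L (x+h))/(-h) :=
      (div_le_div_iff_of_pos_right hhpos).2 hnum
    have hinv : (2:ℝ)^n ≤ 1/(-h) := by
      have hh' : -h < 1/2^n := by rw [← habs]; exact hn2
      have := (lt_div_iff₀ h2n).1 hh'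
      rw [le_div_iff₀ hhpos]
      linarith
    have hstep2 : (wP a ε (M-1) * a) * 2^n ≤ (wP a ε (M-1) * a)/(-h) := by
      rw [div_eq_mul_one_div]
      exact mul_le_mul_of_nonneg_left hinv (by positivity)
    have hstep3 : min a (1-a) * 2^n * wP a ε (M-1) ≤ (wP a ε (M-1) * a) * 2^n := by
      have hmin : min a (1-a) ≤ a := min_le_left _ _
      have := mul_le_mul_of_nonneg_right hmin (mul_nonneg h2n.le hP.le)
      linarith only [this]
    linarith only [hkey, hstep1, hstep2, hstep3]
  · -- h > 0 : use right side, next digit 0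
    have habs : |h| = h := abs_of_pos hpos
    have hexm : ∃ k, n + 2 ≤ k ∧ ε k = 0 := by
      obtain ⟨k, hk1, hk2⟩ := hinf0 (n+2); exact ⟨k, hk1, hk2⟩
    set M := Nat.find hexm with hMdef
    obtain ⟨hM1, hM2⟩ := Nat.find_spec hexm
    have hrun : ∀ k, n + 2 ≤ k → k ≤ M - 1 → ε k = 1 := by
      intro k hk1 hk2
      have hkM : k < M := by omega
      have := Nat.find_min hexm hkM
      push_neg at this
      have h' := this hk1
      have := hε k
      omega
    have hMm1 : M - 1 + 1 = M := by omega
    have hkey := hN n (by omega) M 1 hM1 (le_refl 1) hrun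
    have hxtrM : xtr ε M = xtr ε (M-1) := by
      have hs : xtr ε ((M-1)+1) = xtr ε (M-1) + (ε ((M-1)+1) : ℝ)/2^((M-1)+1) :=
        Finset.sum_range_succ _ _
      rw [hMm1] at hs
      rw [hs, hM2]
      norm_num
    have hP := wP_pos (a := a) (ε := ε) ha0 ha1 (M-1)
    have hhalfM : (1/2:ℝ)/2^(M-1) = 1/2^M := by
      rw [show M = (M-1)+1 by omega, pow_succ]
      field_simp
      simp
    have hr : xtr ε (M-1) + 1/2^(M-1) ∈ Set.Icc (0:ℝ) 1 := by
      constructor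
      · have h0 := xtr_nonneg (ε := ε) (M-1)
        have : (0:ℝ) < 1/2^(M-1) := by positivity
        linarith
      · exact xtr_add_le hε (M-1)
    have hl : xtr ε (M-1) + 1/2^M ∈ Set.Icc (0:ℝ) 1 := by
      constructor
      · have h0 := xtr_nonneg (ε := ε) (M-1)
        have : (0:ℝ) < 1/2^M := by positivity
        linarith
      · have : (1:ℝ)/2^M ≤ 1/2^(M-1) := by
          apply div_le_div_of_nonneg_left one_pos.le (by positivity)
          exact pow_le_pow_right₀ (by norm_num) (by omega)
        have h1 := xtr_add_le hε (M-1)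
        linarith
    have hLl : L (xtr ε (M-1) + 1/2^M) = L (xtr ε (M-1)) + wP a ε (M-1) * a := by
      have := hss (M-1) (1/2) (by norm_num)
      rw [hhalfM] at this
      rw [this, hLhalf]
    have hLr : L (xtr ε (M-1) + 1/2^(M-1)) = L (xtr ε (M-1)) + wP a ε (M-1) := by
      have h' := hss (M-1) 1 (by norm_num)
      rw [hL1, mul_one] at h'
      exact h'
    -- L x ≤ L (xtr (M-1) + 1/2^M)
    have hLx_le : L x ≤ L (xtr ε (M-1) + 1/2^M) := by
      apply hmono _ hxIcc _ hl
      have := (hxb M).2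
      rw [hxtrM] at this
      exact this
    -- L (x + h) ≥ L (xtr (M-1) + 1/2^(M-1))
    have hLxh_ge : L (xtr ε (M-1) + 1/2^(M-1)) ≤ L (x+h) := by
      apply hmono _ hr _ hxhIcc
      have h1 : xtr ε (M-1) ≤ x := (hxb (M-1)).1
      have h2 : (1:ℝ)/2^(M-1) ≤ 1/2^(n+1) := by
        apply div_le_div_of_nonneg_left one_pos.le (by positivity)
        exact pow_le_pow_right₀ (by norm_num) (by omega)
      have h3 : (1:ℝ)/2^(n+1) ≤ h := by rw [← habs]; exact hn1
      linarith
    have hnum : wP a ε (M-1) * (1-a) ≤ L (x+h) - L x := by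
      rw [hLl] at hLx_le
      rw [hLr] at hLxh_ge
      linarith
    have hstep1 : (wP a ε (M-1) * (1-a))/h ≤ (L (x+h) - L x)/h :=
      (div_le_div_iff_of_pos_right hpos).2 hnum
    have hinv : (2:ℝ)^n ≤ 1/h := by
      have hh' : h < 1/2^n := by rw [← habs]; exact hn2
      have := (lt_div_iff₀ h2n).1 hh'
      rw [le_div_iff₀ hpos]
      linarith
    have hstep2 : (wP a ε (M-1) * (1-a)) * 2^n ≤ (wP a ε (M-1) * (1-a))/h := by
      rw [div_eq_mul_one_div]
      exact mul_le_mul_of_nonneg_left hinv (by positivity)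
    have hstep3 : min a (1-a) * 2^n * wP a ε (M-1) ≤ (wP a ε (M-1) * (1-a)) * 2^n := by
      have hmin : min a (1-a) ≤ 1-a := min_le_right _ _
      have := mul_le_mul_of_nonneg_right hmin (mul_nonneg h2n.le hP.le)
      linarith only [this]
    linarith only [hkey, hstep1, hstep2, hstep3]
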